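/- arXiv:2503.10562 — 2 statements merged into one kernel-verified Lean document; each statement's English description precedes it below -/
import Mathlib

section
/- Intersection of tensor products of subspaces: Let K be a field and V, W vector spaces over K. For subspaces P ≤ V and Q ≤ W, write P ⊗̂ Q for the subspace of V ⊗ W spanned by all elementary tensors p ⊗ q with p ∈ P, q ∈ Q. Then for all subspaces A, A′ ≤ V and B, B′ ≤ W one has (A ⊗̂ B′) ∩ (A′ ⊗̂ B) = (A ∩ A′) ⊗̂ (B ∩ B′). -/
open TensorProduct

section Aux

variable {K V W : Type*} [Field K]
    [AddCommGroup V] [Module K V] [AddCommGroup W] [Module K W]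

/-- Kernel of `rTensor` over a field. -/
lemma ker_rTensor_eq {M N : Type*} [AddCommGroup M] [Module K M] [AddCommGroup N] [Module K N]
    (f : M →ₗ[K] N) :
    LinearMap.ker (f.rTensor W) = LinearMap.range ((LinearMap.ker f).subtype.rTensor W) := by
  rw [← LinearMap.exact_iff]
  exact Module.Flat.rTensor_exact W (LinearMap.exact_subtype_ker_map f)

lemma ker_lTensor_eq {M N : Type*} [AddCommGroup M] [Module K M] [AddCommGroup N] [Module K N]
    (f : M →ₗ[K] N) :
    LinearMap.ker (f.lTensor V) = LinearMap.range ((LinearMap.ker f).subtype.lTensor V) := by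
  rw [← LinearMap.exact_iff]
  exact Module.Flat.lTensor_exact V (LinearMap.exact_subtype_ker_map f)

end Aux

/-- For subspaces `P ≤ V` and `Q ≤ W`, the subspace of `V ⊗ W` spanned by the
elementary tensors `p ⊗ q` with `p ∈ P` and `q ∈ Q`. -/
noncomputable def tensorSpan (K : Type*) {V W : Type*} [Field K]
    [AddCommGroup V] [Module K V] [AddCommGroup W] [Module K W]
    (P : Submodule K V) (Q : Submodule K W) : Submodule K (V ⊗[K] W) :=
  Submodule.span K {t : V ⊗[K] W | ∃ p ∈ P, ∃ q ∈ Q, t = p ⊗ₜ[K] q}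

section Main

variable {K V W : Type*} [Field K]
    [AddCommGroup V] [Module K V] [AddCommGroup W] [Module K W]

lemma tensorSpan_eq_range (P : Submodule K V) (Q : Submodule K W) :
    tensorSpan K P Q = LinearMap.range (TensorProduct.map P.subtype Q.subtype) := by
  rw [TensorProduct.range_map_eq_span_tmul, tensorSpan]
  congr 1
  ext t
  constructor
  · rintro ⟨p, hp, q, hq, rfl⟩
    exact ⟨⟨p, hp⟩, ⟨q, hq⟩, rfl⟩
  · rintro ⟨p, q, rfl⟩
    exact ⟨p, p.2, q, q.2, rfl⟩

lemma tensorSpan_top_right (P : Submodule K V) :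
    tensorSpan K P (⊤ : Submodule K W) = LinearMap.range (P.subtype.rTensor W) := by
  rw [show P.subtype.rTensor W = TensorProduct.map P.subtype LinearMap.id from rfl,
    TensorProduct.range_map_eq_span_tmul, tensorSpan]
  congr 1
  ext t
  constructor
  · rintro ⟨p, hp, q, -, rfl⟩
    exact ⟨⟨p, hp⟩, q, rfl⟩
  · rintro ⟨p, q, rfl⟩
    exact ⟨p, p.2, q, trivial, rfl⟩

lemma tensorSpan_top_left (Q : Submodule K W) :
    tensorSpan K (⊤ : Submodule K V) Q = LinearMap.range (Q.subtype.lTensor V) := by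
  rw [show Q.subtype.lTensor V = TensorProduct.map LinearMap.id Q.subtype from rfl,
    TensorProduct.range_map_eq_span_tmul, tensorSpan]
  congr 1
  ext t
  constructor
  · rintro ⟨p, -, q, hq, rfl⟩
    exact ⟨p, ⟨q, hq⟩, rfl⟩
  · rintro ⟨p, q, rfl⟩
    exact ⟨p, trivial, q, q.2, rfl⟩

lemma tensorSpan_mono {P P' : Submodule K V} {Q Q' : Submodule K W}
    (hP : P ≤ P') (hQ : Q ≤ Q') : tensorSpan K P Q ≤ tensorSpan K P' Q' := by
  apply Submodule.span_mono
  rintro t ⟨p, hp, q, hq, rfl⟩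
  exact ⟨p, hP hp, q, hQ hq, rfl⟩

lemma tensorSpan_eq_inf (P : Submodule K V) (Q : Submodule K W) :
    tensorSpan K P Q = tensorSpan K P (⊤ : Submodule K W) ⊓
      tensorSpan K (⊤ : Submodule K V) Q := by
  refine le_antisymm (le_inf (tensorSpan_mono le_rfl le_top) (tensorSpan_mono le_top le_rfl)) ?_
  rw [tensorSpan_top_right, tensorSpan_top_left, tensorSpan_eq_range]
  rintro x ⟨⟨y, rfl⟩, hx2⟩
  -- `x = rTensor P.subtype y`, and `x` is killed by `lTensor V Q.mkQ`
  have hx0 : Q.mkQ.lTensor V (P.subtype.rTensor W y) = 0 := by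
    have : P.subtype.rTensor W y ∈ LinearMap.ker (Q.mkQ.lTensor V) := by
      rw [lTensor_mkQ]
      exact hx2
    exact this
  have hcomm : Q.mkQ.lTensor V (P.subtype.rTensor W y)
      = P.subtype.rTensor (W ⧸ Q) (Q.mkQ.lTensor P y) := by
    have h1 := LinearMap.congr_fun (LinearMap.lTensor_comp_rTensor (f := P.subtype) (g := Q.mkQ)) y
    have h2 := LinearMap.congr_fun (LinearMap.rTensor_comp_lTensor (f := P.subtype) (g := Q.mkQ)) y
    simp only [LinearMap.coe_comp, Function.comp_apply] at h1 h2
    exact h1.trans h2.symm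
  have hinj : Function.Injective (P.subtype.rTensor (W ⧸ Q)) :=
    Module.Flat.rTensor_preserves_injective_linearMap _ P.injective_subtype
  have hy0 : Q.mkQ.lTensor P y = 0 := by
    apply hinj
    rw [← hcomm, hx0, map_zero]
  have hy : y ∈ LinearMap.range (Q.subtype.lTensor P) := by
    rw [← lTensor_mkQ]
    exact hy0
  obtain ⟨z, rfl⟩ := hy
  refine ⟨z, ?_⟩
  exact (LinearMap.congr_fun (LinearMap.rTensor_comp_lTensor (f := P.subtype) (g := Q.subtype)) z).symm

lemma tensorSpan_top_inf (P P' : Submodule K V) :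
    tensorSpan K P (⊤ : Submodule K W) ⊓ tensorSpan K P' (⊤ : Submodule K W)
      = tensorSpan K (P ⊓ P') (⊤ : Submodule K W) := by
  refine le_antisymm ?_
    (le_inf (tensorSpan_mono inf_le_left le_rfl) (tensorSpan_mono inf_le_right le_rfl))
  simp only [tensorSpan_top_right]
  rintro x ⟨⟨y, rfl⟩, hx2⟩
  have hx0 : P'.mkQ.rTensor W (P.subtype.rTensor W y) = 0 := by
    have : P.subtype.rTensor W y ∈ LinearMap.ker (P'.mkQ.rTensor W) := by
      rw [rTensor_mkQ]; exact hx2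
    exact this
  set f : P →ₗ[K] V ⧸ P' := P'.mkQ ∘ₗ P.subtype with hf
  have hy : y ∈ LinearMap.ker (f.rTensor W) := by
    rw [hf, LinearMap.rTensor_comp]
    simpa using hx0
  rw [ker_rTensor_eq] at hy
  obtain ⟨z, rfl⟩ := hy
  -- factor through (P ⊓ P').subtype
  set g : LinearMap.ker f →ₗ[K] (P ⊓ P' : Submodule K V) :=
    { toFun := fun a => ⟨(a : P), ⟨(a : P).2, by
        have := a.2
        exact (Submodule.Quotient.mk_eq_zero _).mp this⟩⟩
      map_add' := fun a b => rfl
      map_smul' := fun c a => rfl } with hg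
  refine ⟨g.rTensor W z, ?_⟩
  have hcomp : (P ⊓ P').subtype ∘ₗ g = P.subtype ∘ₗ (LinearMap.ker f).subtype := rfl
  have := congrArg (fun h => h z)
    ((LinearMap.rTensor_comp W (P ⊓ P').subtype g).symm.trans
      ((congrArg (fun h => LinearMap.rTensor W h) hcomp).trans
        (LinearMap.rTensor_comp W P.subtype (LinearMap.ker f).subtype)))
  simpa using this

lemma tensorSpan_top_inf' (Q Q' : Submodule K W) :
    tensorSpan K (⊤ : Submodule K V) Q ⊓ tensorSpan K (⊤ : Submodule K V) Q'
      = tensorSpan K (⊤ : Submodule K V) (Q ⊓ Q') := by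
  refine le_antisymm ?_
    (le_inf (tensorSpan_mono le_rfl inf_le_left) (tensorSpan_mono le_rfl inf_le_right))
  simp only [tensorSpan_top_left]
  rintro x ⟨⟨y, rfl⟩, hx2⟩
  have hx0 : Q'.mkQ.lTensor V (Q.subtype.lTensor V y) = 0 := by
    have : Q.subtype.lTensor V y ∈ LinearMap.ker (Q'.mkQ.lTensor V) := by
      rw [lTensor_mkQ]; exact hx2
    exact this
  set f : Q →ₗ[K] W ⧸ Q' := Q'.mkQ ∘ₗ Q.subtype with hf
  have hy : y ∈ LinearMap.ker (f.lTensor V) := by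
    rw [hf, LinearMap.lTensor_comp]
    simpa using hx0
  rw [ker_lTensor_eq] at hy
  obtain ⟨z, rfl⟩ := hy
  set g : LinearMap.ker f →ₗ[K] (Q ⊓ Q' : Submodule K W) :=
    { toFun := fun a => ⟨(a : Q), ⟨(a : Q).2, by
        have := a.2
        exact (Submodule.Quotient.mk_eq_zero _).mp this⟩⟩
      map_add' := fun a b => rfl
      map_smul' := fun c a => rfl } with hg
  refine ⟨g.lTensor V z, ?_⟩
  have hcomp : (Q ⊓ Q').subtype ∘ₗ g = Q.subtype ∘ₗ (LinearMap.ker f).subtype := rfl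
  have := congrArg (fun h => h z)
    ((LinearMap.lTensor_comp V (Q ⊓ Q').subtype g).symm.trans
      ((congrArg (fun h => LinearMap.lTensor V h) hcomp).trans
        (LinearMap.lTensor_comp V Q.subtype (LinearMap.ker f).subtype)))
  simpa using this

end Main

/-- Intersection of tensor products of subspaces:
`(A ⊗̂ B') ∩ (A' ⊗̂ B) = (A ∩ A') ⊗̂ (B ∩ B')`. -/
theorem tensorSpan_inf_tensorSpan (K : Type*) {V W : Type*} [Field K]
    [AddCommGroup V] [Module K V] [AddCommGroup W] [Module K W]
    (A A' : Submodule K V) (B B' : Submodule K W) :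
    tensorSpan K A B' ⊓ tensorSpan K A' B = tensorSpan K (A ⊓ A') (B ⊓ B') := by
  rw [tensorSpan_eq_inf A B', tensorSpan_eq_inf A' B, tensorSpan_eq_inf (A ⊓ A') (B ⊓ B'),
    inf_inf_inf_comm, tensorSpan_top_inf, tensorSpan_top_inf', inf_comm B' B]
end

section
/- Invertibility of the weighted projection on a finite-dimensional subspace: Let (α, μ) be a measure space and ω : α → ℝ a measurable function that is essentially bounded and satisfies ω(a) > 0 for μ-almost every a. Let V be a finite-dimensional subspace of the real Hilbert space L²(μ). Define P_ω : V → V by P_ω(L) = (orthogonal projection onto V) of the element ω·L of L²(μ). Then P_ω is a linear bijection of V onto itself. -/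
open MeasureTheory

/-- Invertibility of the weighted projection on a finite-dimensional subspace of `L²`:
if `ω` is measurable, essentially bounded and a.e. strictly positive, and `V` is a
finite-dimensional subspace of `L²(μ)`, then the map `P_ω : V → V`,
`L ↦ orthogonal projection onto V of ω·L`, is a linear bijection of `V` onto itself. -/
theorem weighted_projection_bijective
    {α : Type*} [MeasurableSpace α] (μ : Measure α)
    (ω : α → ℝ) (hmeas : Measurable ω)
    (C : ℝ) (hbound : ∀ᵐ a ∂μ, |ω a| ≤ C)
    (hpos : ∀ᵐ a ∂μ, 0 < ω a)
    (V : Submodule ℝ (Lp ℝ 2 μ)) [FiniteDimensional ℝ V]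
    (Pω : V →ₗ[ℝ] V)
    (hPω : ∀ (L : V) (g : Lp ℝ 2 μ),
      (g : α → ℝ) =ᵐ[μ] (fun a => ω a * (L : Lp ℝ 2 μ) a) →
      Pω L = V.orthogonalProjectionOnto g) :
    Function.Bijective Pω := by
  have hinj : Function.Injective Pω := by
    rw [← LinearMap.ker_eq_bot, LinearMap.ker_eq_bot']
    intro L hL
    -- the function ω · L is in L²
    have hmem : MemLp (fun a => ω a * (L : Lp ℝ 2 μ) a) 2 μ := by
      refine MemLp.of_le_mul (c := C) (Lp.memLp (L : Lp ℝ 2 μ))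
        (hmeas.aestronglyMeasurable.mul (Lp.aestronglyMeasurable _)) ?_
      filter_upwards [hbound] with a ha
      rw [norm_mul]
      exact mul_le_mul_of_nonneg_right (by simpa using ha) (norm_nonneg _)
    set g : Lp ℝ 2 μ := hmem.toLp _ with hg
    have hgae : (g : α → ℝ) =ᵐ[μ] fun a => ω a * (L : Lp ℝ 2 μ) a := hmem.coeFn_toLp
    have h0 : V.orthogonalProjectionOnto g = 0 := (hPω L g hgae).symm.trans hL
    have hperp : g ∈ Vᗮ := Submodule.orthogonalProjectionOnto_eq_zero_iff.mp h0
    have hinner : (inner ℝ (L : Lp ℝ 2 μ) g : ℝ) = 0 :=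
      hperp (L : Lp ℝ 2 μ) L.2
    have hint : ∫ a, (L : Lp ℝ 2 μ) a * g a ∂μ = 0 := by
      rw [← hinner, L2.inner_def]
      congr 1; funext a; simp [RCLike.inner_apply']; exact mul_comm _ _
    have hintg : Integrable (fun a => (L : Lp ℝ 2 μ) a * g a) μ :=
      (L2.integrable_inner (𝕜 := ℝ) (L : Lp ℝ 2 μ) g).congr (ae_of_all _ fun a => by simp [RCLike.inner_apply']; exact mul_comm _ _)
    have hnonneg : 0 ≤ᵐ[μ] fun a => (L : Lp ℝ 2 μ) a * g a := by
      filter_upwards [hgae, hpos] with a ha hω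
      simp only [Pi.zero_apply, ha]
      have : (L : Lp ℝ 2 μ) a * (ω a * (L : Lp ℝ 2 μ) a)
          = ω a * ((L : Lp ℝ 2 μ) a)^2 := by ring
      rw [this]
      positivity
    have hzero : (fun a => (L : Lp ℝ 2 μ) a * g a) =ᵐ[μ] 0 :=
      (integral_eq_zero_iff_of_nonneg_ae hnonneg hintg).mp hint
    have hLzero : ((L : Lp ℝ 2 μ) : α → ℝ) =ᵐ[μ] 0 := by
      filter_upwards [hzero, hgae, hpos] with a h0a hga hω
      simp only [Pi.zero_apply] at h0a ⊢
      rw [hga] at h0a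
      have : ω a * ((L : Lp ℝ 2 μ) a)^2 = 0 := by rw [← h0a]; ring
      have h2 : ((L : Lp ℝ 2 μ) a)^2 = 0 := by
        rcases mul_eq_zero.mp this with h | h
        · exact absurd h hω.ne'
        · exact h
      exact pow_eq_zero_iff (by norm_num) |>.mp h2
    exact Subtype.ext (Lp.ext (hLzero.trans (Lp.coeFn_zero ℝ 2 μ).symm))
  exact ⟨hinj, (LinearMap.injective_iff_surjective).mp hinj⟩
end
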